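/- For every δ ≥ 2γ - 1, the function t ↦ f'(t) f(t)^δ is non-decreasing on [0,∞). In fact its derivative is positive for t > 0: (f'(t) f(t)^δ)' = (1 + (2γ)^{p-1} f(t)^{p(2γ-1)})^{-2/p} f(t)^{δ-1} · [δ + (2γ)^{p-1}(δ + 1 - 2γ) f(t)^{p(2γ-1)}] / [1 + (2γ)^{p-1} f(t)^{p(2γ-1)}] > 0. -/

import Mathlib

open Set

private lemma alg_aux (B P1 P2 P3 P4 c δ p γ : ℝ) (e1 : P3*P4 = P1*P2) (hp : p ≠ 0)
    (hA0 : (1:ℝ) + c*P1 ≠ 0) :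
    B*B*P2*((δ + c*(δ+1-2*γ)*P1)/(1+c*P1)) =
      (-(1/p)*(B/(1+c*P1))*(c*((p*(2*γ-1))*P3))*P4 + B*(δ*P2))*B := by
  field_simp
  linear_combination (B*B*c*(2*γ-1)) * e1


theorem stmt9 (p γ δ : ℝ) (hp : 1 < p) (hγ : 1/2 < γ) (hδ : 2*γ - 1 ≤ δ)
    (f f' : ℝ → ℝ)
    (hodd : ∀ t, f (-t) = - f t) (hf0 : f 0 = 0)
    (hderiv : ∀ t, HasDerivAt f (f' t) t)
    (hf' : ∀ t, f' t = (1 + (2*γ)^(p-1) * |f t| ^ (p*(2*γ-1))) ^ (-(1/p))) :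
    MonotoneOn (fun t => f' t * f t ^ δ) (Set.Ici 0) ∧
    ∀ t : ℝ, 0 < t →
      HasDerivAt (fun s => f' s * f s ^ δ)
        ((1 + (2*γ)^(p-1) * f t ^ (p*(2*γ-1))) ^ (-(2/p)) * f t ^ (δ-1) *
          ((δ + (2*γ)^(p-1) * (δ + 1 - 2*γ) * f t ^ (p*(2*γ-1))) /
            (1 + (2*γ)^(p-1) * f t ^ (p*(2*γ-1))))) t ∧
      0 < (1 + (2*γ)^(p-1) * f t ^ (p*(2*γ-1))) ^ (-(2/p)) * f t ^ (δ-1) *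
          ((δ + (2*γ)^(p-1) * (δ + 1 - 2*γ) * f t ^ (p*(2*γ-1))) /
            (1 + (2*γ)^(p-1) * f t ^ (p*(2*γ-1)))) := by
  have h2γ : (0:ℝ) < 2*γ := by linarith
  set c : ℝ := (2*γ)^(p-1) with hc
  set Q : ℝ := p*(2*γ-1) with hQ
  have hcpos : 0 < c := Real.rpow_pos_of_pos h2γ _
  have hQpos : 0 < Q := by
    have h1 : 0 < 2*γ-1 := by linarith
    have hp0 : (0:ℝ) < p := by linarith
    rw [hQ]; exact mul_pos hp0 h1
  have hδpos : 0 < δ := by linarith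
  have hppos : (0:ℝ) < p := by linarith
  have hf'pos : ∀ t, 0 < f' t := by
    intro t
    rw [hf' t]
    apply Real.rpow_pos_of_pos
    have : 0 ≤ c * |f t| ^ Q := by positivity
    linarith
  have hmono : StrictMono f := by
    apply strictMono_of_deriv_pos
    intro x
    rw [(hderiv x).deriv]
    exact hf'pos x
  have hfpos : ∀ t : ℝ, 0 < t → 0 < f t := by
    intro t ht
    have := hmono ht
    rwa [hf0] at this
  have key : ∀ t : ℝ, 0 < t →
      HasDerivAt (fun s => f' s * f s ^ δ)
        ((1 + c * f t ^ Q) ^ (-(2/p)) * f t ^ (δ-1) *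
          ((δ + c * (δ + 1 - 2*γ) * f t ^ Q) / (1 + c * f t ^ Q))) t := by
    intro t ht
    set x : ℝ := f t with hx
    have hxpos : 0 < x := hfpos t ht
    set A : ℝ := 1 + c * x ^ Q with hA
    have hApos : 0 < A := by
      have : 0 ≤ c * x ^ Q := by positivity
      rw [hA]; linarith
    have h1 : HasDerivAt (fun y : ℝ => y ^ Q) (Q * x ^ (Q-1)) x :=
      Real.hasDerivAt_rpow_const (Or.inl hxpos.ne')
    have h2 : HasDerivAt (fun y : ℝ => 1 + c * y ^ Q) (c * (Q * x ^ (Q-1))) x :=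
      (h1.const_mul c).const_add 1
    have h3 : HasDerivAt (fun y : ℝ => y ^ (-(1/p))) (-(1/p) * A ^ (-(1/p)-1)) A :=
      Real.hasDerivAt_rpow_const (Or.inl hApos.ne')
    have h4 : HasDerivAt (fun y : ℝ => (1 + c * y ^ Q) ^ (-(1/p)))
        ((-(1/p) * A ^ (-(1/p)-1)) * (c * (Q * x ^ (Q-1)))) x := by
      have := h3.comp x h2; exact this
    have h5 : HasDerivAt (fun y : ℝ => y ^ δ) (δ * x ^ (δ-1)) x :=
      Real.hasDerivAt_rpow_const (Or.inl hxpos.ne')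
    have h6 : HasDerivAt (fun y : ℝ => (1 + c * y ^ Q) ^ (-(1/p)) * y ^ δ)
        ((-(1/p) * A ^ (-(1/p)-1)) * (c * (Q * x ^ (Q-1))) * x ^ δ
          + A ^ (-(1/p)) * (δ * x ^ (δ-1))) x := h4.mul h5
    have h7 := h6.comp t (hderiv t)
    have heq : (fun s => f' s * f s ^ δ)
        =ᶠ[nhds t] (fun y : ℝ => (1 + c * y ^ Q) ^ (-(1/p)) * y ^ δ) ∘ f := by
      have hcont : ContinuousAt f t := (hderiv t).continuousAt
      have hev : ∀ᶠ s in nhds t, 0 < f s :=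
        hcont.eventually (eventually_gt_nhds hxpos)
      filter_upwards [hev] with s hs
      simp only [Function.comp]
      rw [hf' s, abs_of_pos hs]
    have h8 := h7.congr_of_eventuallyEq heq
    refine h8.congr_deriv ?_
    symm
    rw [hf' t, abs_of_pos hxpos, ← hA]
    have e1 : x ^ (Q-1) * x ^ δ = x ^ Q * x ^ (δ-1) := by
      rw [← Real.rpow_add hxpos, ← Real.rpow_add hxpos]
      ring_nf
    have e2 : A ^ (-(1/p)-1) = A ^ (-(1/p)) / A := by
      rw [show -(1/p)-1 = -(1/p) + (-1:ℝ) by ring, Real.rpow_add hApos,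
        Real.rpow_neg_one]
      ring
    have e3 : A ^ (-(2/p)) = A ^ (-(1/p)) * A ^ (-(1/p)) := by
      rw [← Real.rpow_add hApos]
      ring_nf
    have hp0 : p ≠ 0 := hppos.ne'
    have hA0 : (1:ℝ) + c * x ^ (p*(2*γ-1)) ≠ 0 := by
      have h1 : 0 ≤ c * x ^ (p*(2*γ-1)) :=
        mul_nonneg hcpos.le (Real.rpow_pos_of_pos hxpos _).le
      have : (0:ℝ) < 1 + c * x ^ (p*(2*γ-1)) := by linarith
      exact this.ne'
    rw [e2, e3, hA, hQ]
    rw [hQ] at e1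
    exact alg_aux _ _ _ _ _ c δ p γ e1 hp0 hA0
  have pos : ∀ t : ℝ, 0 < t →
      0 < (1 + c * f t ^ Q) ^ (-(2/p)) * f t ^ (δ-1) *
        ((δ + c * (δ + 1 - 2*γ) * f t ^ Q) / (1 + c * f t ^ Q)) := by
    intro t ht
    have hx := hfpos t ht
    have hXpos : 0 < f t ^ Q := Real.rpow_pos_of_pos hx Q
    have hApos : 0 < 1 + c * f t ^ Q := by positivity
    have hnz : 0 ≤ c * (δ + 1 - 2*γ) * f t ^ Q :=
      mul_nonneg (mul_nonneg hcpos.le (by linarith)) hXpos.le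
    have hnum : 0 < δ + c * (δ + 1 - 2*γ) * f t ^ Q := by linarith
    exact mul_pos (mul_pos (Real.rpow_pos_of_pos hApos _)
      (Real.rpow_pos_of_pos hx _)) (div_pos hnum hApos)
  have hfc : Continuous f := continuous_iff_continuousAt.mpr fun t => (hderiv t).continuousAt
  have cont : Continuous (fun t => f' t * f t ^ δ) := by
    have hg : (fun t => f' t * f t ^ δ)
        = fun t => (1 + c * |f t| ^ Q) ^ (-(1/p)) * f t ^ δ :=
      funext fun t => by rw [hf' t]
    rw [hg]
    have c1 : Continuous fun t => |f t| ^ Q :=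
      hfc.abs.rpow_const (fun t => Or.inr hQpos.le)
    have c2 : Continuous fun t => 1 + c * |f t| ^ Q :=
      continuous_const.add (continuous_const.mul c1)
    have c3 : Continuous fun t => (1 + c * |f t| ^ Q) ^ (-(1/p)) := by
      apply c2.rpow_const
      intro t
      left
      have : 0 ≤ c * |f t| ^ Q := by positivity
      positivity
    exact c3.mul (hfc.rpow_const fun t => Or.inr hδpos.le)
  constructor
  · apply StrictMonoOn.monotoneOn
    apply strictMonoOn_of_deriv_pos (convex_Ici 0) cont.continuousOn
    intro t ht
    rw [interior_Ici] at ht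
    rw [(key t ht).deriv]
    exact pos t ht
  · exact fun t ht => ⟨key t ht, pos t ht⟩
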